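/- For every set Σ of propositional variables, every belief sequence σ and every level k, the set of answered queries with smallest language Σ is consistent: {α : L_α = Σ} ∩ C_k(σ) ⊬ ⊥ (this set of formulas is jointly satisfiable). In particular, for no formula γ do both σ ⊢_k γ and σ ⊢_k ¬γ hold. -/

import Mathlib

namespace BeliefSeq

/-- Propositional formulas over a type `ν` of propositional variables,
with connectives ¬, ∧, ∨, →, ↔ and constants true, false. -/
inductive PropForm (ν : Type) : Type where
  | var : ν → PropForm ν
  | tru : PropForm ν
  | fls : PropForm ν
  | neg : PropForm ν → PropForm ν
  | conj : PropForm ν → PropForm ν → PropForm ν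
  | disj : PropForm ν → PropForm ν → PropForm ν
  | impl : PropForm ν → PropForm ν → PropForm ν
  | biim : PropForm ν → PropForm ν → PropForm ν

namespace PropForm

variable {ν : Type}

/-- Classical (two-valued) evaluation of a formula under a valuation. -/
def eval (v : ν → Bool) : PropForm ν → Bool
  | var x => v x
  | tru => true
  | fls => false
  | neg φ => !(φ.eval v)
  | conj φ ψ => φ.eval v && ψ.eval v
  | disj φ ψ => φ.eval v || ψ.eval v
  | impl φ ψ => !(φ.eval v) || ψ.eval v
  | biim φ ψ => φ.eval v == ψ.eval v

/-- The set `L(α)` of variables occurring syntactically in a formula. -/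
def vars : PropForm ν → Set ν
  | var x => {x}
  | tru => ∅
  | fls => ∅
  | neg φ => φ.vars
  | conj φ ψ => φ.vars ∪ ψ.vars
  | disj φ ψ => φ.vars ∪ ψ.vars
  | impl φ ψ => φ.vars ∪ ψ.vars
  | biim φ ψ => φ.vars ∪ ψ.vars

end PropForm

variable {ν : Type}

/-- `α ⇔ β` : logical equivalence (α ↔ β is a tautology). -/
def Equiv (α β : PropForm ν) : Prop := ∀ v, α.eval v = β.eval v

def Tautology (α : PropForm ν) : Prop := ∀ v, α.eval v = true

def Contradiction (α : PropForm ν) : Prop := ∀ v, α.eval v = false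

/-- Classical consequence `Γ ⊢ γ`. -/
def Entails (Γ : Set (PropForm ν)) (γ : PropForm ν) : Prop :=
  ∀ v, (∀ φ ∈ Γ, φ.eval v = true) → γ.eval v = true

/-- Consistency (satisfiability) of a set of formulas. -/
def Satisfiable (Γ : Set (PropForm ν)) : Prop :=
  ∃ v, ∀ φ ∈ Γ, φ.eval v = true

/-- `V` expresses `α`: α is logically equivalent to some formula
all of whose variables lie in `V`. -/
def Expresses (V : Set ν) (α : PropForm ν) : Prop :=
  ∃ β : PropForm ν, Equiv α β ∧ β.vars ⊆ V

/-- `L_α` : the smallest language of `α` (intersection of all sets of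
variables expressing `α`). -/
def Lang (α : PropForm ν) : Set ν := ⋂₀ {V : Set ν | Expresses V α}

/-- Direct relevance (`0`-relevance): logical language overlap `L_α ∩ L_β ≠ ∅`. -/
def DirectRel (α β : PropForm ν) : Prop := (Lang α ∩ Lang β).Nonempty

/-- `k`-relevance of `α`, `β` w.r.t. the belief sequence `σ`:
there is a chain `χ_1, …, χ_k` of formulas of `σ` with
`α, χ₁` directly relevant, each `χ_i, χ_{i+1}` directly relevant,
and `χ_k, β` directly relevant (for `k = 0` this is direct relevance). -/
def KRel (k : ℕ) (α β : PropForm ν) (σ : List (PropForm ν)) : Prop :=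
  ∃ l : List (PropForm ν), l.length = k ∧ (∀ χ ∈ l, χ ∈ σ) ∧
    List.Chain' DirectRel (α :: (l ++ [β]))

/-- `rel(α,β,σ)` : the least `k` such that `α, β` are `k`-relevant w.r.t. `σ`
(`∞ = ⊤` if they are irrelevant). -/
noncomputable def relDeg (α β : PropForm ν) (σ : List (PropForm ν)) : ℕ∞ :=
  sInf {n : ℕ∞ | ∃ k : ℕ, n = (k : ℕ∞) ∧ KRel k α β σ}

open Classical in
/-- The priority ordering imposed by the query `γ` on the (indexed) entries of `σ`:
more relevant first; among equally relevant entries, more recent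
(larger index) first. -/
noncomputable def priority (γ : PropForm ν) (σ : List (PropForm ν)) :
    (ℕ × PropForm ν) → (ℕ × PropForm ν) → Bool :=
  fun a b =>
    decide (relDeg γ a.2 σ < relDeg γ b.2 σ ∨
      (relDeg γ a.2 σ = relDeg γ b.2 σ ∧ b.1 ≤ a.1))

/-- The entries `δ_1, …, δ_n` of `σ` reordered by the priority above. -/
noncomputable def prioritized (γ : PropForm ν) (σ : List (PropForm ν)) :
    List (PropForm ν) :=
  ((σ.zipIdx.map Prod.swap).mergeSort (priority γ σ)).map Prod.snd

open Classical in
/-- The prioritized maxiconsistent set `Γ_{⟨σ,k,γ⟩}` : go through `δ_1, …, δ_n`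
in priority order, skipping `δ_{i+1}` if `Γ^i ⊢ ¬δ_{i+1}` or `δ_{i+1}` is not
`k`-relevant to `γ` w.r.t. `σ`, and adding it otherwise. -/
noncomputable def Gamma (σ : List (PropForm ν)) (k : ℕ) (γ : PropForm ν) :
    Set (PropForm ν) :=
  (prioritized γ σ).foldl
    (fun Γ δ =>
      if Entails Γ (PropForm.neg δ) ∨ (k : ℕ∞) < relDeg γ δ σ then Γ
      else insert δ Γ) ∅

/-- `σ ⊢_k γ` iff `Γ_{⟨σ,k,γ⟩} ⊢ γ`. -/
def InferK (σ : List (PropForm ν)) (k : ℕ) (γ : PropForm ν) : Prop :=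
  Entails (Gamma σ k γ) γ

/-- `C_k(σ) = {γ | σ ⊢_k γ}`. -/
def Ck (σ : List (PropForm ν)) (k : ℕ) : Set (PropForm ν) :=
  {γ | InferK σ k γ}

/-- Revision `σ * γ` : concatenation of `γ` at the (most recent) end of `σ`. -/
def revise (σ : List (PropForm ν)) (γ : PropForm ν) : List (PropForm ν) :=
  σ ++ [γ]


lemma lang_neg (γ : PropForm ν) : Lang (PropForm.neg γ) = Lang γ := by
  have hset : {V : Set ν | Expresses V (PropForm.neg γ)} = {V | Expresses V γ} := by
    ext V
    simp only [Set.mem_setOf_eq]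
    constructor
    · rintro ⟨β, h, hv⟩
      refine ⟨PropForm.neg β, fun v => ?_, hv⟩
      have := h v
      simp only [PropForm.eval] at this ⊢
      rw [← this, Bool.not_not]
    · rintro ⟨β, h, hv⟩
      refine ⟨PropForm.neg β, fun v => ?_, hv⟩
      simp only [PropForm.eval, h v]
  unfold Lang
  rw [hset]

lemma chain'_cons_congr {α : Type*} {R : α → α → Prop} {a a' : α}
    (h : ∀ x, R a x ↔ R a' x) :
    ∀ t : List α, List.Chain' R (a :: t) ↔ List.Chain' R (a' :: t)
  | [] => iff_of_true (List.isChain_singleton _) (List.isChain_singleton _)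
  | b :: t => by simp [List.Chain', List.isChain_cons_cons, h b]

lemma krel_congr {γ₁ γ₂ : PropForm ν} (h : Lang γ₁ = Lang γ₂)
    (k : ℕ) (β : PropForm ν) (σ : List (PropForm ν)) :
    KRel k γ₁ β σ ↔ KRel k γ₂ β σ := by
  unfold KRel
  refine exists_congr fun l => and_congr_right fun _ => and_congr_right fun _ => ?_
  exact chain'_cons_congr (fun x => by simp [DirectRel, h]) _

lemma relDeg_congr {γ₁ γ₂ : PropForm ν} (h : Lang γ₁ = Lang γ₂)
    (β : PropForm ν) (σ : List (PropForm ν)) :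
    relDeg γ₁ β σ = relDeg γ₂ β σ := by
  unfold relDeg
  congr 1
  ext n
  simp only [Set.mem_setOf_eq, krel_congr h]

lemma gamma_congr {γ₁ γ₂ : PropForm ν} (h : Lang γ₁ = Lang γ₂)
    (σ : List (PropForm ν)) (k : ℕ) : Gamma σ k γ₁ = Gamma σ k γ₂ := by
  have hrel : ∀ β, relDeg γ₁ β σ = relDeg γ₂ β σ := fun β => relDeg_congr h β σ
  unfold Gamma prioritized priority
  congr 1
  · funext Γ δ
    rw [hrel δ]
  · congr 1
    congr 1
    funext a b
    rw [hrel a.2, hrel b.2]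

lemma gamma_sat (σ : List (PropForm ν)) (k : ℕ) (γ : PropForm ν) :
    Satisfiable (Gamma σ k γ) := by
  classical
  unfold Gamma
  have : ∀ (l : List (PropForm ν)) (Γ : Set (PropForm ν)), Satisfiable Γ →
      Satisfiable (l.foldl
        (fun Γ δ =>
          if Entails Γ (PropForm.neg δ) ∨ (k : ℕ∞) < relDeg γ δ σ then Γ
          else insert δ Γ) Γ) := by
    intro l
    induction l with
    | nil => intro Γ h; exact h
    | cons δ l ih =>
      intro Γ h
      simp only [List.foldl_cons]
      apply ih
      by_cases hc : Entails Γ (PropForm.neg δ) ∨ (k : ℕ∞) < relDeg γ δ σ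
      · simpa [hc] using h
      · rw [if_neg hc]
        push_neg at hc
        obtain ⟨hne, -⟩ := hc
        unfold Entails at hne
        push_neg at hne
        obtain ⟨v, hv, hd⟩ := hne
        refine ⟨v, fun φ hφ => ?_⟩
        rcases hφ with rfl | hφ
        · simp only [PropForm.eval, Bool.not_eq_true'] at hd
          simpa using hd
        · exact hv φ hφ
  exact this _ ∅ ⟨fun _ => true, by simp⟩

/-- for every set `S` of variables, the set of answered queries
with smallest language `S` is jointly satisfiable (hence does not entail ⊥);
in particular, for no γ do both `σ ⊢_k γ` and `σ ⊢_k ¬γ` hold. -/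
theorem answers_fixed_lang_consistent {ν : Type} (S : Set ν)
    (σ : List (PropForm ν)) (k : ℕ) :
    Satisfiable ({α : PropForm ν | Lang α = S} ∩ Ck σ k) ∧
    ¬ Entails ({α : PropForm ν | Lang α = S} ∩ Ck σ k) PropForm.fls ∧
    ∀ γ : PropForm ν, ¬ (InferK σ k γ ∧ InferK σ k (PropForm.neg γ)) := by
  have key : Satisfiable ({α : PropForm ν | Lang α = S} ∩ Ck σ k) := by
    by_cases hne : ({α : PropForm ν | Lang α = S} ∩ Ck σ k).Nonempty
    · obtain ⟨α₀, hα₀L, hα₀C⟩ := hne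
      obtain ⟨v, hv⟩ := gamma_sat σ k α₀
      refine ⟨v, fun φ ⟨hφL, hφC⟩ => ?_⟩
      have hG : Gamma σ k φ = Gamma σ k α₀ :=
        gamma_congr (by rw [hφL, ← hα₀L]) σ k
      have := hφC v
      rw [hG] at this
      exact this hv
    · exact ⟨fun _ => true, fun φ hφ => absurd ⟨φ, hφ⟩ hne⟩
  refine ⟨key, ?_, ?_⟩
  · intro hE
    obtain ⟨v, hv⟩ := key
    have := hE v hv
    simp [PropForm.eval] at this
  · rintro γ ⟨h1, h2⟩
    obtain ⟨v, hv⟩ := gamma_sat σ k γ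
    have hγ := h1 v hv
    have hG : Gamma σ k (PropForm.neg γ) = Gamma σ k γ :=
      gamma_congr (lang_neg γ) σ k
    have hnγ := h2 v (by rw [hG]; exact hv)
    simp [PropForm.eval, hγ] at hnγ

end BeliefSeq
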